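/- Let X₁, …, X_m be independent real random variables each taking values in [−1,1], each with variance at most v > 0. Let X̄ = (1/m)∑ X_i. Then for every ε ∈ (0,2), P(|X̄ − E X̄| ≥ ε) < 2 · 4^m · v^{εm/2}. -/

import Mathlib

open MeasureTheory ProbabilityTheory Nat

private lemma exp_quad_bound {t y : ℝ} (ht : 0 ≤ t) (hy : |y| ≤ 2) :
    Real.exp (t * y) ≤ 1 + t * y + y ^ 2 / 4 * (Real.exp (2 * t) - 1 - 2 * t) := by
  have h1 : HasSum (fun n : ℕ => (t * y) ^ n / n !) (Real.exp (t * y)) := by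
    simpa [Real.exp_eq_exp_ℝ] using NormedSpace.expSeries_div_hasSum_exp (t * y)
  have h2 : HasSum (fun n : ℕ => (2 * t) ^ n / n !) (Real.exp (2 * t)) := by
    simpa [Real.exp_eq_exp_ℝ] using NormedSpace.expSeries_div_hasSum_exp (2 * t)
  have h1' : HasSum (fun n : ℕ => (t * y) ^ (n + 2) / (n + 2)!)
      (Real.exp (t * y) - (1 + t * y)) := by
    have := (hasSum_nat_add_iff' (f := fun n : ℕ => (t * y) ^ n / n !) 2).mpr h1
    simpa [Finset.sum_range_succ, Nat.factorial] using this
  have h2' : HasSum (fun n : ℕ => y ^ 2 / 4 * ((2 * t) ^ (n + 2) / (n + 2)!))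
      (y ^ 2 / 4 * (Real.exp (2 * t) - (1 + 2 * t))) := by
    have := (hasSum_nat_add_iff' (f := fun n : ℕ => (2 * t) ^ n / n !) 2).mpr h2
    exact HasSum.mul_left _ (by simpa [Finset.sum_range_succ, Nat.factorial] using this)
  have hle : Real.exp (t * y) - (1 + t * y)
      ≤ y ^ 2 / 4 * (Real.exp (2 * t) - (1 + 2 * t)) := by
    refine hasSum_le (fun n => ?_) h1' h2'
    have hnum : (t * y) ^ (n + 2) ≤ y ^ 2 / 4 * (2 * t) ^ (n + 2) := by
      have h0 : (t * y) ^ (n + 2) ≤ |t * y| ^ (n + 2) := by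
        calc (t * y) ^ (n + 2) ≤ |(t * y) ^ (n + 2)| := le_abs_self _
        _ = |t * y| ^ (n + 2) := (abs_pow _ _)
      have h3 : |t * y| ^ (n + 2) = t ^ (n + 2) * (|y| ^ n * |y| ^ 2) := by
        rw [abs_mul, abs_of_nonneg ht, mul_pow, ← pow_add]
      have h4 : |y| ^ n * |y| ^ 2 ≤ 2 ^ n * y ^ 2 := by
        have := pow_le_pow_left₀ (abs_nonneg y) hy n
        have hsq : |y| ^ 2 = y ^ 2 := sq_abs y
        rw [hsq]
        exact mul_le_mul_of_nonneg_right this (sq_nonneg y)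
      have h5 : t ^ (n + 2) * (2 ^ n * y ^ 2) = y ^ 2 / 4 * (2 * t) ^ (n + 2) := by
        rw [mul_pow, pow_add]; ring
      calc (t * y) ^ (n + 2) ≤ t ^ (n + 2) * (|y| ^ n * |y| ^ 2) := by rw [← h3]; exact h0
      _ ≤ t ^ (n + 2) * (2 ^ n * y ^ 2) :=
          mul_le_mul_of_nonneg_left h4 (pow_nonneg ht _)
      _ = y ^ 2 / 4 * (2 * t) ^ (n + 2) := h5
    have hfac : (0:ℝ) < (n + 2)! := by positivity
    calc (t * y) ^ (n + 2) / (n + 2)! ≤ (y ^ 2 / 4 * (2 * t) ^ (n + 2)) / (n + 2)! := by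
          exact div_le_div_of_nonneg_right hnum hfac.le
    _ = y ^ 2 / 4 * ((2 * t) ^ (n + 2) / (n + 2)!) := by ring
  nlinarith [hle]

private lemma mgf_bennett {Ω : Type*} [MeasurableSpace Ω] (μ : Measure Ω)
    [IsProbabilityMeasure μ] {Y : Ω → ℝ} (hY : Measurable Y) (hb : ∀ ω, |Y ω| ≤ 2)
    (hmean : μ[Y] = 0) {v t : ℝ} (hvar : μ[fun ω => Y ω ^ 2] ≤ v) (ht : 0 ≤ t) :
    mgf Y μ t ≤ Real.exp (v * ((Real.exp (2 * t) - 1 - 2 * t) / 4)) := by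
  set c := Real.exp (2 * t) - 1 - 2 * t with hc
  have hc0 : 0 ≤ c := by nlinarith [Real.add_one_le_exp (2 * t)]
  have hYint : Integrable Y μ :=
    (integrable_const (2:ℝ)).mono' hY.aestronglyMeasurable
      (ae_of_all _ fun ω => by simpa using hb ω)
  have hY2int : Integrable (fun ω => Y ω ^ 2) μ := by
    refine (integrable_const (4:ℝ)).mono' (hY.pow_const 2).aestronglyMeasurable
      (ae_of_all _ fun ω => ?_)
    have := hb ω
    have : Y ω ^ 2 ≤ 4 := by nlinarith [abs_nonneg (Y ω), sq_abs (Y ω)]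
    simpa [abs_of_nonneg (sq_nonneg (Y ω))] using this
  have hsum_int : Integrable (fun ω => 1 + t * Y ω + Y ω ^ 2 / 4 * c) μ :=
    ((integrable_const (1:ℝ)).add (hYint.const_mul t)).add ((hY2int.div_const 4).mul_const c)
  have key : ∫ ω, Real.exp (t * Y ω) ∂μ ≤ ∫ ω, (1 + t * Y ω + Y ω ^ 2 / 4 * c) ∂μ := by
    refine integral_mono ?_ hsum_int fun ω => exp_quad_bound ht (hb ω)
    refine (integrable_const (Real.exp (2 * t))).mono'
      ((hY.const_mul t).exp).aestronglyMeasurable (ae_of_all _ fun ω => ?_)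
    have h1 : t * Y ω ≤ 2 * t := by
      have := (abs_le.mp (hb ω)).2
      nlinarith
    simpa [abs_of_nonneg (Real.exp_nonneg _)] using Real.exp_le_exp.mpr h1
  have hi1 : Integrable (fun ω => 1 + t * Y ω) μ :=
    (integrable_const (1:ℝ)).add (hYint.const_mul t)
  have hi2 : Integrable (fun ω => Y ω ^ 2 / 4 * c) μ := (hY2int.div_const 4).mul_const c
  have hval : ∫ ω, (1 + t * Y ω + Y ω ^ 2 / 4 * c) ∂μ
      = 1 + t * μ[Y] + (μ[fun ω => Y ω ^ 2]) / 4 * c := by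
    rw [integral_add hi1 hi2, integral_add (integrable_const (1:ℝ)) (hYint.const_mul t),
      integral_const, integral_const_mul, integral_mul_const, integral_div]
    simp
  have : mgf Y μ t ≤ 1 + v * c / 4 := by
    rw [mgf]
    refine key.trans ?_
    rw [hval, hmean]
    have h2 : (μ[fun ω => Y ω ^ 2]) / 4 * c ≤ v / 4 * c := by
      apply mul_le_mul_of_nonneg_right _ hc0
      linarith
    linarith
  refine this.trans ?_
  have := Real.add_one_le_exp (v * (c / 4))
  nlinarith

private lemma onesided {Ω : Type*} [MeasurableSpace Ω] (μ : Measure Ω) [IsProbabilityMeasure μ]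
    (m : ℕ) (hm : 0 < m) (Y : Fin m → Ω → ℝ)
    (hmeas : ∀ i, Measurable (Y i))
    (hindep : iIndepFun Y μ)
    (hb : ∀ i ω, |Y i ω| ≤ 2)
    (hmean : ∀ i, μ[Y i] = 0)
    (v : ℝ) (hv : 0 < v) (hvar : ∀ i, μ[fun ω => Y i ω ^ 2] ≤ v)
    (ε : ℝ) (hε0 : 0 < ε) (hε2 : ε < 2) :
    (μ {ω | (m:ℝ) * ε ≤ ∑ i, Y i ω}).toReal < 4 ^ m * v ^ (ε * m / 2) := by
  set L := Real.log (1 + 2 * ε / v) with hL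
  have hbase : (1:ℝ) ≤ 1 + 2 * ε / v := by
    have : 0 < 2 * ε / v := by positivity
    linarith
  have hL0 : 0 ≤ L := Real.log_nonneg hbase
  set t := L / 2 with htdef
  have ht0 : 0 ≤ t := by positivity
  have hexp2t : Real.exp (2 * t) = 1 + 2 * ε / v := by
    rw [htdef]
    rw [show 2 * (L / 2) = L by ring, hL, Real.exp_log (by linarith)]
  set c := Real.exp (2 * t) - 1 - 2 * t with hc
  have hint : ∀ i, Integrable (fun ω => Real.exp (t * Y i ω)) μ := by
    intro i
    refine (integrable_const (Real.exp (2 * t))).mono'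
      (((hmeas i).const_mul t).exp).aestronglyMeasurable (ae_of_all _ fun ω => ?_)
    have h1 : t * Y i ω ≤ 2 * t := by
      have := (abs_le.mp (hb i ω)).2
      nlinarith
    simpa [abs_of_nonneg (Real.exp_nonneg _)] using Real.exp_le_exp.mpr h1
  have hint_sum : Integrable (fun ω => Real.exp (t * (∑ i, Y i) ω)) μ :=
    hindep.integrable_exp_mul_sum hmeas (fun i _ => hint i)
  have chernoff := measure_ge_le_exp_mul_mgf (X := ∑ i, Y i) (μ := μ) ((m:ℝ) * ε) ht0 hint_sum
  have hset : {ω | (m:ℝ) * ε ≤ (∑ i, Y i) ω} = {ω | (m:ℝ) * ε ≤ ∑ i, Y i ω} := by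
    ext ω; simp [Finset.sum_apply]
  rw [hset] at chernoff
  have hmgf : mgf (∑ i, Y i) μ t ≤ Real.exp (v * (c / 4)) ^ m := by
    rw [hindep.mgf_sum hmeas]
    calc ∏ i, mgf (Y i) μ t ≤ ∏ _i : Fin m, Real.exp (v * (c / 4)) := by
          refine Finset.prod_le_prod (fun i _ => mgf_nonneg) fun i _ => ?_
          exact mgf_bennett μ (hmeas i) (hb i) (hmean i) (hvar i) ht0
    _ = Real.exp (v * (c / 4)) ^ m := by
        rw [Finset.prod_const, Finset.card_univ, Fintype.card_fin]
  have step1 : (μ {ω | (m:ℝ) * ε ≤ ∑ i, Y i ω}).toReal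
      ≤ Real.exp ((m:ℝ) * (v * (c / 4) - t * ε)) := by
    refine chernoff.trans ?_
    have : Real.exp (-t * ((m:ℝ) * ε)) * mgf (∑ i, Y i) μ t
        ≤ Real.exp (-t * ((m:ℝ) * ε)) * Real.exp (v * (c / 4)) ^ m :=
      mul_le_mul_of_nonneg_left hmgf (Real.exp_nonneg _)
    refine this.trans (le_of_eq ?_)
    rw [← Real.exp_nat_mul, ← Real.exp_add]
    ring_nf
  -- key numeric inequality
  have hm1 : (1:ℝ) ≤ (m:ℝ) := by exact_mod_cast hm
  have hKlt : v * (c / 4) - t * ε < Real.log 4 + ε / 2 * Real.log v := by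
    have hcval : c = 2 * ε / v - L := by rw [hc, hexp2t, htdef]; ring
    have hvc : v * (c / 4) = ε / 2 - v * L / 4 := by
      rw [hcval]; field_simp; ring
    have hLsplit : L = Real.log (v + 2 * ε) - Real.log v := by
      rw [hL, show (1 : ℝ) + 2 * ε / v = (v + 2 * ε) / v by field_simp,
        Real.log_div (by positivity) (ne_of_gt hv)]
    have key1 : Real.log (2 * ε) < Real.log (v + 2 * ε) :=
      Real.log_lt_log (by positivity) (by linarith)
    have key2 : 2 * ε * (1 - Real.log (2 * ε)) ≤ 1 := by
      have h := Real.log_le_sub_one_of_pos (show (0:ℝ) < (2 * ε)⁻¹ by positivity)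
      rw [Real.log_inv] at h
      have hε' : (0:ℝ) < 2 * ε := by positivity
      have h2 : 2 * ε * (-Real.log (2 * ε)) ≤ 2 * ε * ((2 * ε)⁻¹ - 1) :=
        mul_le_mul_of_nonneg_left h (le_of_lt hε')
      have h3 : 2 * ε * ((2 * ε)⁻¹ - 1) = 1 - 2 * ε := by field_simp
      nlinarith
    have key3 : (1:ℝ) / 4 < Real.log 4 := by
      have h4 : Real.log 4 = 2 * Real.log 2 := by
        rw [show (4:ℝ) = 2 ^ 2 by norm_num, Real.log_pow]; push_cast; ring
      have := Real.log_two_gt_d9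
      rw [h4]; linarith
    have hvL : 0 ≤ v * L / 4 := by positivity
    have hmul : ε / 2 * Real.log (2 * ε) < ε / 2 * Real.log (v + 2 * ε) :=
      mul_lt_mul_of_pos_left key1 (by positivity)
    have hexpand : v * (c / 4) - t * ε
        = ε / 2 - v * L / 4 - ε / 2 * Real.log (v + 2 * ε) + ε / 2 * Real.log v := by
      rw [hvc, htdef, hLsplit]; ring
    rw [hexpand]
    nlinarith
  have step2 : Real.exp ((m:ℝ) * (v * (c / 4) - t * ε))
      < Real.exp ((m:ℝ) * (Real.log 4 + ε / 2 * Real.log v)) := by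
    apply Real.exp_lt_exp.mpr
    exact mul_lt_mul_of_pos_left hKlt (by positivity)
  have step3 : Real.exp ((m:ℝ) * (Real.log 4 + ε / 2 * Real.log v))
      = 4 ^ m * v ^ (ε * m / 2) := by
    rw [mul_add, Real.exp_add, Real.exp_nat_mul, Real.exp_log (by norm_num : (0:ℝ) < 4),
      Real.rpow_def_of_pos hv]
    congr 1
    ring
  calc (μ {ω | (m:ℝ) * ε ≤ ∑ i, Y i ω}).toReal
      ≤ Real.exp ((m:ℝ) * (v * (c / 4) - t * ε)) := step1
  _ < 4 ^ m * v ^ (ε * m / 2) := by rw [← step3]; exact step2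

theorem stmt4 {Ω : Type*} [MeasurableSpace Ω] (μ : Measure Ω) [IsProbabilityMeasure μ]
    (m : ℕ) (hm : 0 < m) (X : Fin m → Ω → ℝ)
    (hmeas : ∀ i, Measurable (X i))
    (hindep : iIndepFun X μ)
    (hrange : ∀ i ω, X i ω ∈ Set.Icc (-1 : ℝ) 1)
    (v : ℝ) (hv : 0 < v) (hvar : ∀ i, variance (X i) μ ≤ v)
    (ε : ℝ) (hε0 : 0 < ε) (hε2 : ε < 2) :
    (μ {ω | ε ≤ |(1 / m : ℝ) * ∑ i, X i ω - μ[fun ω => (1 / m : ℝ) * ∑ i, X i ω]|}).toReal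
      < 2 * 4 ^ m * v ^ (ε * m / 2) := by
  have hm' : (0:ℝ) < (m:ℝ) := by exact_mod_cast hm
  set EX : Fin m → ℝ := fun i => μ[X i] with hEX
  set Y : Fin m → Ω → ℝ := fun i ω => X i ω - EX i with hY
  have hXint : ∀ i, Integrable (X i) μ := by
    intro i
    refine (integrable_const (1:ℝ)).mono' (hmeas i).aestronglyMeasurable
      (ae_of_all _ fun ω => ?_)
    have := hrange i ω
    rw [Real.norm_eq_abs, abs_le]
    exact ⟨this.1, this.2⟩
  have hEXmem : ∀ i, -1 ≤ EX i ∧ EX i ≤ 1 := by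
    intro i
    constructor
    · have := integral_mono (integrable_const (-1:ℝ)) (hXint i) (fun ω => (hrange i ω).1)
      simpa using this
    · have := integral_mono (hXint i) (integrable_const (1:ℝ)) (fun ω => (hrange i ω).2)
      simpa using this
  have hYmeas : ∀ i, Measurable (Y i) := fun i => (hmeas i).sub_const _
  have hYb : ∀ i ω, |Y i ω| ≤ 2 := by
    intro i ω
    have h1 := hrange i ω
    have h2 := hEXmem i
    rw [hY, abs_le]
    constructor <;> simp only <;> [linarith [h1.1, h2.2]; linarith [h1.2, h2.1]]
  have hYmean : ∀ i, μ[Y i] = 0 := by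
    intro i
    rw [hY]
    simp only
    rw [integral_sub (hXint i) (integrable_const _), integral_const]
    simp [hEX]
  have hYvar : ∀ i, μ[fun ω => Y i ω ^ 2] ≤ v := by
    intro i
    have hmem : MemLp (X i) 2 μ :=
      memLp_of_bounded (ae_of_all _ (hrange i)) (hmeas i).aestronglyMeasurable 2
    have := variance_eq_integral (μ := μ) (hmeas i).aemeasurable
    have heq : μ[fun ω => Y i ω ^ 2] = variance (X i) μ := by
      rw [this]
    rw [heq]
    exact hvar i
  have hYindep : iIndepFun Y μ :=
    hindep.comp (fun i x => x - EX i) (fun i => measurable_id.sub_const _)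
  have hYnindep : iIndepFun (fun i ω => -Y i ω) μ :=
    hindep.comp (fun i x => -(x - EX i)) (fun i => (measurable_id.sub_const _).neg)
  have hEZ : μ[fun ω => (1 / m : ℝ) * ∑ i, X i ω] = (1 / m : ℝ) * ∑ i, EX i := by
    rw [integral_const_mul, integral_finset_sum _ (fun i _ => hXint i)]
  have hZeq : ∀ ω, (1 / m : ℝ) * ∑ i, X i ω - μ[fun ω => (1 / m : ℝ) * ∑ i, X i ω]
      = (1 / m : ℝ) * ∑ i, Y i ω := by
    intro ω
    rw [hEZ, hY]
    simp only
    rw [Finset.sum_sub_distrib]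
    ring
  set A := {ω | (m:ℝ) * ε ≤ ∑ i, Y i ω} with hA
  set B := {ω | (m:ℝ) * ε ≤ ∑ i, -Y i ω} with hB
  have hsub : {ω | ε ≤ |(1 / m : ℝ) * ∑ i, X i ω - μ[fun ω => (1 / m : ℝ) * ∑ i, X i ω]|}
      ⊆ A ∪ B := by
    intro ω hω
    simp only [Set.mem_setOf_eq] at hω
    rw [hZeq ω] at hω
    rcases le_abs.mp hω with h | h
    · left
      rw [hA, Set.mem_setOf_eq]
      have := mul_le_mul_of_nonneg_left h (le_of_lt hm')
      calc (m:ℝ) * ε ≤ (m:ℝ) * ((1 / m : ℝ) * ∑ i, Y i ω) := this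
      _ = ∑ i, Y i ω := by field_simp
    · right
      rw [hB, Set.mem_setOf_eq]
      have := mul_le_mul_of_nonneg_left h (le_of_lt hm')
      rw [Finset.sum_neg_distrib]
      calc (m:ℝ) * ε ≤ (m:ℝ) * -((1 / m : ℝ) * ∑ i, Y i ω) := this
      _ = -∑ i, Y i ω := by field_simp
  have hPA : (μ A).toReal < 4 ^ m * v ^ (ε * m / 2) :=
    onesided μ m hm Y hYmeas hYindep hYb hYmean v hv hYvar ε hε0 hε2
  have hPB : (μ B).toReal < 4 ^ m * v ^ (ε * m / 2) := by
    have := onesided μ m hm (fun i ω => -Y i ω) (fun i => (hYmeas i).neg) hYnindep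
      (fun i ω => by rw [abs_neg]; exact hYb i ω)
      (fun i => by rw [integral_neg, hYmean i, neg_zero])
      v hv (fun i => by simpa using hYvar i) ε hε0 hε2
    exact this
  have hsum : (μ {ω | ε ≤ |(1 / m : ℝ) * ∑ i, X i ω
      - μ[fun ω => (1 / m : ℝ) * ∑ i, X i ω]|}).toReal ≤ (μ A).toReal + (μ B).toReal := by
    rw [← ENNReal.toReal_add (measure_ne_top μ A) (measure_ne_top μ B)]
    refine ENNReal.toReal_mono ?_ ((measure_mono hsub).trans (measure_union_le A B))
    exact ENNReal.add_ne_top.mpr ⟨measure_ne_top μ A, measure_ne_top μ B⟩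
  linarith
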